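/- Let b, c > 0 and 0 < α < 2 < β, and define h(t) = (1/2)t² − c t^α − b t^β for t > 0. Suppose that the maximum value of φ(t) = (1/2)t^{2−α} − b t^{β−α} over (0,∞) is strictly greater than c. Then there exist 0 < R₀ < R₁ such that h(R₀) = 0 = h(R₁), h(t) > 0 if and only if t ∈ (R₀, R₁), h has a local strict minimum at negative level in (0, R₀), and h has a global strict maximum at positive level in (R₀, R₁). -/

import Mathlib

open Real Filter Topology Set


lemma spec_cont (p q K : ℝ) (s : Set ℝ) (hs : ∀ x ∈ s, x ≠ 0) :
    ContinuousOn (fun t : ℝ => t ^ p - K * t ^ q) s := fun x hx =>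
  (((Real.continuousAt_rpow_const x p (Or.inl (hs x hx))).sub
    ((continuousAt_const).mul
      (Real.continuousAt_rpow_const x q (Or.inl (hs x hx)))))).continuousWithinAt

lemma spec_deriv (p q K : ℝ) {t : ℝ} (ht : 0 < t) :
    HasDerivAt (fun t : ℝ => t ^ p - K * t ^ q)
      (t ^ (p - 1) * (p - K * q * t ^ (q - p))) t := by
  have h1 : HasDerivAt (fun x : ℝ => x ^ p) (p * t ^ (p - 1)) t :=
    Real.hasDerivAt_rpow_const (Or.inl ht.ne')
  have h2 : HasDerivAt (fun x : ℝ => K * x ^ q) (K * (q * t ^ (q - 1))) t :=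
    (Real.hasDerivAt_rpow_const (Or.inl ht.ne')).const_mul K
  have e : t ^ (p - 1) * t ^ (q - p) = t ^ (q - 1) := by
    rw [← Real.rpow_add ht]; ring_nf
  refine (h1.sub h2).congr_deriv ?_; symm
  linear_combination (-(K*q)) * e

lemma spec (p q K L : ℝ) (hp : 0 < p) (hpq : p < q) (hK : 0 < K) (hL : 0 < L)
    (hex : ∃ t : ℝ, 0 < t ∧ L < t ^ p - K * t ^ q) :
    ∃ r₀ r₁ : ℝ, 0 < r₀ ∧ r₀ < r₁ ∧
      r₀ ^ p - K * r₀ ^ q = L ∧ r₁ ^ p - K * r₁ ^ q = L ∧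
      (∀ t : ℝ, 0 < t → t < r₀ → t ^ p - K * t ^ q < L) ∧
      (∀ t : ℝ, r₀ < t → t < r₁ → L < t ^ p - K * t ^ q) ∧
      (∀ t : ℝ, r₁ < t → t ^ p - K * t ^ q < L) := by
  set g : ℝ → ℝ := fun t => t ^ p - K * t ^ q with hg
  have hq : 0 < q := hp.trans hpq
  have hqp : 0 < q - p := sub_pos.2 hpq
  set A : ℝ := p / (K * q) with hA
  have hA0 : 0 < A := div_pos hp (mul_pos hK hq)
  set m : ℝ := A ^ (1 / (q - p)) with hm
  have hm0 : 0 < m := Real.rpow_pos_of_pos hA0 _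
  have hmkey : m ^ (q - p) = A := by
    rw [hm, ← Real.rpow_mul hA0.le, one_div, inv_mul_cancel₀ hqp.ne', Real.rpow_one]
  have hKqA : K * q * A = p := by rw [hA]; field_simp
  have hmono : StrictMonoOn g (Ioc 0 m) := by
    apply strictMonoOn_of_deriv_pos (convex_Ioc 0 m)
      (spec_cont p q K _ (fun x hx => hx.1.ne'))
    intro t ht
    rw [interior_Ioc] at ht
    rw [(spec_deriv p q K ht.1).deriv]
    have h1 : (0:ℝ) < t ^ (p - 1) := Real.rpow_pos_of_pos ht.1 _
    have h2 : t ^ (q - p) < A := by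
      rw [← hmkey]; exact Real.rpow_lt_rpow ht.1.le ht.2 hqp
    have h3 : K * q * t ^ (q - p) < p := by
      calc K * q * t ^ (q - p) < K * q * A := by
            exact (mul_lt_mul_iff_right₀ (mul_pos hK hq)).2 h2
        _ = p := hKqA
    exact mul_pos h1 (by linarith)
  have hanti : StrictAntiOn g (Ici m) := by
    apply strictAntiOn_of_deriv_neg (convex_Ici m)
      (spec_cont p q K _ (fun x hx => (hm0.trans_le hx).ne'))
    intro t ht
    rw [interior_Ici] at ht
    have htpos : 0 < t := hm0.trans ht
    rw [(spec_deriv p q K htpos).deriv]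
    have h1 : (0:ℝ) < t ^ (p - 1) := Real.rpow_pos_of_pos htpos _
    have h2 : A < t ^ (q - p) := by
      rw [← hmkey]; exact Real.rpow_lt_rpow hm0.le ht hqp
    have h3 : p < K * q * t ^ (q - p) := by
      calc p = K * q * A := hKqA.symm
        _ < K * q * t ^ (q - p) := (mul_lt_mul_iff_right₀ (mul_pos hK hq)).2 h2
    exact mul_neg_of_pos_of_neg h1 (by linarith)
  obtain ⟨t0, ht0, hgt0⟩ := hex
  have hgm : L < g m := by
    rcases le_or_gt t0 m with h' | h'
    · rcases eq_or_lt_of_le h' with rfl | h''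
      · exact hgt0
      · exact hgt0.trans_le (hmono ⟨ht0, h'⟩ ⟨hm0, le_refl m⟩ h'').le
    · exact hgt0.trans (hanti self_mem_Ici h'.le h')
  have htend0 : Tendsto g (𝓝[>] (0:ℝ)) (𝓝 0) := by
    have h0 : ContinuousAt g 0 :=
      (Real.continuousAt_rpow_const 0 p (Or.inr hp.le)).sub
        ((Real.continuousAt_rpow_const 0 q (Or.inr hq.le)).const_mul K)
    have := h0.tendsto
    have hg0 : g 0 = 0 := by
      simp [hg, Real.zero_rpow hp.ne', Real.zero_rpow hq.ne']
    rw [hg0] at this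
    exact this.mono_left nhdsWithin_le_nhds
  obtain ⟨ε, hεL, hεm⟩ : ∃ ε : ℝ, g ε < L ∧ ε ∈ Ioo (0:ℝ) m := by
    refine ((htend0.eventually_lt_const hL).and ?_).exists
    exact eventually_of_mem (Ioo_mem_nhdsGT_of_mem ⟨le_refl 0, hm0⟩) (fun x hx => hx)
  obtain ⟨r₀, hr₀mem, hr₀⟩ :=
    intermediate_value_Icc hεm.2.le
      (spec_cont p q K _ (fun x hx => (hεm.1.trans_le hx.1).ne')) ⟨hεL.le, hgm.le⟩
  have r₀pos : 0 < r₀ := hεm.1.trans_le hr₀mem.1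
  have hr₀m : r₀ < m := by
    rcases eq_or_lt_of_le hr₀mem.2 with rfl | h'
    · exact absurd hr₀ hgm.ne'
    · exact h'
  have htendBot : Tendsto g atTop atBot := by
    have h1 : Tendsto (fun t : ℝ => t ^ q) atTop atTop := tendsto_rpow_atTop hq
    have h2 : Tendsto (fun t : ℝ => t ^ (p - q) - K) atTop (𝓝 (0 - K)) := by
      have h4 := tendsto_rpow_neg_atTop hqp
      rw [neg_sub] at h4
      exact h4.sub tendsto_const_nhds
    have h3 := Filter.Tendsto.atTop_mul_neg (by linarith : (0:ℝ) - K < 0) h1 h2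
    apply Filter.Tendsto.congr' _ h3
    filter_upwards [eventually_gt_atTop (0:ℝ)] with t ht
    have e : t ^ q * t ^ (p - q) = t ^ p := by rw [← Real.rpow_add ht]; ring_nf
    simp only [hg]
    linear_combination e
  obtain ⟨T, hmT, hTL⟩ : ∃ T : ℝ, m < T ∧ g T < L :=
    ((eventually_gt_atTop m).and (htendBot.eventually (eventually_lt_atBot L))).exists
  obtain ⟨r₁, hr₁mem, hr₁⟩ :=
    intermediate_value_Icc' hmT.le
      (spec_cont p q K _ (fun x hx => (hm0.trans_le hx.1).ne')) ⟨hTL.le, hgm.le⟩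
  have hmr₁ : m < r₁ := by
    rcases eq_or_lt_of_le hr₁mem.1 with rfl | h'
    · exact absurd hr₁ hgm.ne'
    · exact h'
  refine ⟨r₀, r₁, r₀pos, hr₀m.trans hmr₁, hr₀, hr₁, ?_, ?_, ?_⟩
  · intro t ht htr
    exact lt_of_lt_of_eq (hmono ⟨ht, (htr.trans hr₀m).le⟩ ⟨r₀pos, hr₀m.le⟩ htr) hr₀
  · intro t h1 h2
    rcases le_or_gt t m with h' | h'
    · exact lt_of_eq_of_lt hr₀.symm (hmono ⟨r₀pos, hr₀m.le⟩ ⟨r₀pos.trans h1, h'⟩ h1)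
    · exact lt_of_eq_of_lt hr₁.symm (hanti h'.le hr₁mem.1 h2)
  · intro t h1
    exact lt_of_lt_of_eq (hanti hr₁mem.1 (hr₁mem.1.trans h1.le) h1) hr₁

/-- Structure of `h(t) = t²/2 − c t^α − b t^β` (for `b, c > 0`, `0 < α < 2 < β`)
under the condition that the maximum of `φ(t) = (1/2)t^{2−α} − b t^{β−α}` over `(0,∞)`
is strictly greater than `c`: there are `0 < R₀ < R₁` with `h(R₀) = 0 = h(R₁)`,
`h > 0` exactly on `(R₀, R₁)`, `h` has a strict local minimum at negative level in
`(0, R₀)`, and a strict global maximum (over `(0,∞)`) at positive level in `(R₀, R₁)`. -/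
theorem stmt3 (b c α β : ℝ) (hb : 0 < b) (hc : 0 < c)
    (hα0 : 0 < α) (hα2 : α < 2) (hβ : 2 < β)
    (h : ℝ → ℝ)
    (hdef : ∀ t : ℝ, h t = t ^ 2 / 2 - c * t ^ α - b * t ^ β)
    (hmax : ∃ tbar : ℝ, 0 < tbar ∧
      (∀ t : ℝ, 0 < t →
        t ^ (2 - α) / 2 - b * t ^ (β - α) ≤ tbar ^ (2 - α) / 2 - b * tbar ^ (β - α)) ∧
      c < tbar ^ (2 - α) / 2 - b * tbar ^ (β - α)) :
    ∃ R₀ R₁ : ℝ, 0 < R₀ ∧ R₀ < R₁ ∧ h R₀ = 0 ∧ h R₁ = 0 ∧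
      (∀ t : ℝ, 0 < t → (0 < h t ↔ t ∈ Set.Ioo R₀ R₁)) ∧
      (∃ t₁ ∈ Set.Ioo 0 R₀, h t₁ < 0 ∧ ∀ᶠ s in 𝓝[≠] t₁, h t₁ < h s) ∧
      (∃ t₂ ∈ Set.Ioo R₀ R₁, 0 < h t₂ ∧ ∀ s : ℝ, 0 < s → s ≠ t₂ → h s < h t₂) := by
  obtain ⟨tbar, htbar0, hmax1, hmax2⟩ := hmax
  have hβ0 : (0:ℝ) < β := by linarith
  -- factorization of h
  have hfact : ∀ t : ℝ, 0 < t →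
      h t = t ^ α * ((t ^ (2 - α) - (2 * b) * t ^ (β - α)) - 2 * c) / 2 := by
    intro t ht
    rw [hdef]
    have e1 : t ^ α * t ^ (2 - α) = t ^ (2:ℕ) := by
      rw [← Real.rpow_add ht]
      norm_num
    have e2 : t ^ α * t ^ (β - α) = t ^ β := by
      rw [← Real.rpow_add ht]; ring_nf
    linear_combination (-(1:ℝ)/2) * e1 + b * e2
  -- derivative of h
  have hderiv : ∀ t : ℝ, 0 < t → HasDerivAt h
      (t ^ (α - 1) * ((t ^ (2 - α) - (b * β) * t ^ (β - α)) - c * α)) t := by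
    intro t ht
    have h1 : HasDerivAt (fun x : ℝ => x ^ 2 / 2) (((2:ℕ) * t ^ (2 - 1)) / 2) t :=
      (hasDerivAt_pow 2 t).div_const 2
    have h2 := (Real.hasDerivAt_rpow_const (x := t) (p := α) (Or.inl ht.ne')).const_mul c
    have h3 := (Real.hasDerivAt_rpow_const (x := t) (p := β) (Or.inl ht.ne')).const_mul b
    have hh : h = fun t => t ^ 2 / 2 - c * t ^ α - b * t ^ β := funext hdef
    rw [hh]
    refine ((h1.sub h2).sub h3).congr_deriv ?_; symm
    have e1 : t ^ (α - 1) * t ^ (2 - α) = t := by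
      rw [← Real.rpow_add ht]
      norm_num
    have e2 : t ^ (α - 1) * t ^ (β - α) = t ^ (β - 1) := by
      rw [← Real.rpow_add ht]; ring_nf
    push_cast
    simp only [pow_one]
    linear_combination e1 - (b * β) * e2
  -- continuity of h off 0
  have hcont : ∀ s : Set ℝ, (∀ x ∈ s, x ≠ 0) → ContinuousOn h s := by
    intro s hs
    rw [funext hdef]
    intro x hx
    exact ((((continuous_pow 2).continuousAt.div_const 2).sub
      ((Real.continuousAt_rpow_const x α (Or.inl (hs x hx))).const_mul c)).sub
      ((Real.continuousAt_rpow_const x β (Or.inl (hs x hx))).const_mul b)).continuousWithinAt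
  -- h → 0 at 0⁺
  have htend0 : Tendsto h (𝓝[>] (0:ℝ)) (𝓝 0) := by
    rw [funext hdef]
    have h0 : ContinuousAt (fun t : ℝ => t ^ 2 / 2 - c * t ^ α - b * t ^ β) 0 :=
      (((continuous_pow 2).continuousAt.div_const 2).sub
        ((Real.continuousAt_rpow_const 0 α (Or.inr hα0.le)).const_mul c)).sub
        ((Real.continuousAt_rpow_const 0 β (Or.inr hβ0.le)).const_mul b)
    have h1 := h0.tendsto
    simp only [Real.zero_rpow hα0.ne', Real.zero_rpow hβ0.ne'] at h1
    norm_num at h1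
    exact h1.mono_left nhdsWithin_le_nhds
  -- spectrum of Φ at level 2c
  obtain ⟨R₀, R₁, hR₀pos, hR₀R₁, hΦR₀, hΦR₁, sign1, sign2, sign3⟩ :=
    spec (2 - α) (β - α) (2 * b) (2 * c) (by linarith) (by linarith) (by linarith)
      (by linarith) ⟨tbar, htbar0, by nlinarith⟩
  -- sign iff
  have hsign : ∀ t : ℝ, 0 < t →
      (0 < h t ↔ 2 * c < t ^ (2 - α) - (2 * b) * t ^ (β - α)) := by
    intro t ht
    have h4 : (0:ℝ) < t ^ α := Real.rpow_pos_of_pos ht α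
    rw [hfact t ht]
    constructor
    · intro hh
      by_contra hle
      push_neg at hle
      nlinarith
    · intro hx
      nlinarith [mul_pos h4 (by linarith : (0:ℝ) < (t ^ (2 - α) - (2 * b) * t ^ (β - α)) - 2 * c)]
  have htbarpos : 0 < h tbar := by
    rw [hfact tbar htbar0]
    nlinarith [Real.rpow_pos_of_pos htbar0 α]
  -- zeros
  have hR₀zero : h R₀ = 0 := by rw [hfact R₀ hR₀pos, hΦR₀]; ring
  have hR₁zero : h R₁ = 0 := by rw [hfact R₁ (hR₀pos.trans hR₀R₁), hΦR₁]; ring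
  have hiff : ∀ t : ℝ, 0 < t → (0 < h t ↔ t ∈ Set.Ioo R₀ R₁) := by
    intro t ht
    rw [hsign t ht]
    constructor
    · intro hΦ
      rcases lt_trichotomy t R₀ with h' | rfl | h'
      · exact absurd hΦ (not_lt.2 (sign1 t ht h').le)
      · rw [hΦR₀] at hΦ; exact absurd hΦ (lt_irrefl _)
      · rcases lt_trichotomy t R₁ with h'' | rfl | h''
        · exact ⟨h', h''⟩
        · rw [hΦR₁] at hΦ; exact absurd hΦ (lt_irrefl _)
        · exact absurd hΦ (not_lt.2 (sign3 t h'').le)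
    · intro ht'
      exact sign2 t ht'.1 ht'.2
  -- existence of point with Ψ above level cα
  have hexΨ : ∃ t : ℝ, 0 < t ∧ c * α < t ^ (2 - α) - (b * β) * t ^ (β - α) := by
    by_contra hcon
    push_neg at hcon
    have hmono' : AntitoneOn h (Ioi 0) := by
      apply antitoneOn_of_deriv_nonpos (convex_Ioi 0) (hcont _ (fun x hx => ne_of_gt hx))
      · intro x hx
        rw [interior_Ioi] at hx
        exact ((hderiv x hx).differentiableAt).differentiableWithinAt
      · intro x hx
        rw [interior_Ioi] at hx
        rw [(hderiv x hx).deriv]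
        apply mul_nonpos_of_nonneg_of_nonpos (Real.rpow_pos_of_pos hx _).le
        have := hcon x hx
        linarith
    have : h tbar ≤ 0 := by
      apply ge_of_tendsto htend0
      filter_upwards [Ioo_mem_nhdsGT_of_mem ⟨le_refl (0:ℝ), htbar0⟩] with s hs
      exact hmono' hs.1 htbar0 hs.2.le
    linarith
  -- spectrum of Ψ at level cα
  obtain ⟨t₁, t₂, ht₁pos, ht₁t₂, hΨt₁, hΨt₂, s1, s2, s3⟩ :=
    spec (2 - α) (β - α) (b * β) (c * α) (by linarith) (by linarith)
      (mul_pos hb hβ0) (mul_pos hc hα0) hexΨ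
  have ht₂pos : 0 < t₂ := ht₁pos.trans ht₁t₂
  -- monotonicity pieces of h
  have hAnti1 : StrictAntiOn h (Ioc 0 t₁) := by
    apply strictAntiOn_of_deriv_neg (convex_Ioc 0 t₁) (hcont _ (fun x hx => hx.1.ne'))
    intro x hx
    rw [interior_Ioc] at hx
    rw [(hderiv x hx.1).deriv]
    exact mul_neg_of_pos_of_neg (Real.rpow_pos_of_pos hx.1 _)
      (by have := s1 x hx.1 hx.2; linarith)
  have hMono2 : StrictMonoOn h (Icc t₁ t₂) := by
    apply strictMonoOn_of_deriv_pos (convex_Icc t₁ t₂)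
      (hcont _ (fun x hx => (ht₁pos.trans_le hx.1).ne'))
    intro x hx
    rw [interior_Icc] at hx
    rw [(hderiv x (ht₁pos.trans hx.1)).deriv]
    exact mul_pos (Real.rpow_pos_of_pos (ht₁pos.trans hx.1) _)
      (by have := s2 x hx.1 hx.2; linarith)
  have hAnti3 : StrictAntiOn h (Ici t₂) := by
    apply strictAntiOn_of_deriv_neg (convex_Ici t₂) (hcont _ (fun x hx => (ht₂pos.trans_le hx).ne'))
    intro x hx
    rw [interior_Ici] at hx
    rw [(hderiv x (ht₂pos.trans hx)).deriv]
    exact mul_neg_of_pos_of_neg (Real.rpow_pos_of_pos (ht₂pos.trans hx) _)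
      (by have := s3 x hx; linarith)
  -- h ≤ 0 on (0, t₁]
  have hneg : ∀ s ∈ Ioc (0:ℝ) t₁, h s ≤ 0 := by
    intro s hs
    apply ge_of_tendsto htend0
    filter_upwards [Ioo_mem_nhdsGT_of_mem ⟨le_refl (0:ℝ), hs.1⟩] with u hu
    exact hAnti1.antitoneOn ⟨hu.1, hu.2.le.trans hs.2⟩ hs hu.2.le
  have ht₁neg : h t₁ < 0 := by
    have h1 : h t₁ < h (t₁ / 2) :=
      hAnti1 ⟨half_pos ht₁pos, (half_le_self ht₁pos.le)⟩ ⟨ht₁pos, le_refl t₁⟩ (half_lt_self ht₁pos)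
    have h2 : h (t₁ / 2) ≤ 0 := hneg _ ⟨half_pos ht₁pos, half_le_self ht₁pos.le⟩
    linarith
  have ht₁tbar : t₁ < tbar := by
    by_contra h'
    push_neg at h'
    exact absurd (hneg tbar ⟨htbar0, h'⟩) (not_le.2 htbarpos)
  have ht₂pos' : 0 < h t₂ := by
    rcases le_or_gt tbar t₂ with h' | h'
    · exact lt_of_lt_of_le htbarpos (hMono2.monotoneOn ⟨ht₁tbar.le, h'⟩ ⟨ht₁t₂.le, le_refl t₂⟩ h')
    · exact lt_trans htbarpos (hAnti3 self_mem_Ici h'.le h')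
  have ht₂mem : t₂ ∈ Set.Ioo R₀ R₁ := (hiff t₂ ht₂pos).1 ht₂pos'
  have ht₁R₀ : t₁ < R₀ := by
    rcases lt_trichotomy t₁ R₀ with h' | rfl | h'
    · exact h'
    · rw [hR₀zero] at ht₁neg; exact absurd ht₁neg (lt_irrefl 0)
    · have := (hiff t₁ ht₁pos).2 ⟨h', ht₁t₂.trans ht₂mem.2⟩
      linarith
  have hmin : ∀ᶠ s in 𝓝[≠] t₁, h t₁ < h s := by
    have hmem : Ioo (0:ℝ) t₂ ∈ 𝓝 t₁ := Ioo_mem_nhds ht₁pos ht₁t₂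
    filter_upwards [nhdsWithin_le_nhds hmem, self_mem_nhdsWithin] with s hs hne
    rcases lt_or_gt_of_ne hne with h' | h'
    · exact hAnti1 ⟨hs.1, h'.le⟩ ⟨ht₁pos, le_refl t₁⟩ h'
    · exact hMono2 ⟨le_refl t₁, ht₁t₂.le⟩ ⟨h'.le, hs.2.le⟩ h'
  have hmax' : ∀ s : ℝ, 0 < s → s ≠ t₂ → h s < h t₂ := by
    intro s hs hne
    rcases le_or_gt s t₁ with h' | h'
    · exact lt_of_le_of_lt (hneg s ⟨hs, h'⟩) ht₂pos'
    · rcases lt_or_gt_of_ne hne with h'' | h''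
      · exact hMono2 ⟨h'.le, h''.le⟩ ⟨ht₁t₂.le, le_refl t₂⟩ h''
      · exact hAnti3 self_mem_Ici h''.le h''
  exact ⟨R₀, R₁, hR₀pos, hR₀R₁, hR₀zero, hR₁zero, hiff,
    ⟨t₁, ⟨ht₁pos, ht₁R₀⟩, ht₁neg, hmin⟩, ⟨t₂, ht₂mem, ht₂pos', hmax'⟩⟩
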